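/- Any packing of n·m pairwise non-overlapping (possibly rotated and translated) unit squares inside the rectangle [0,n] × [0,m] must be the axis-aligned grid packing: each square equals [i,i+1] × [j,j+1] for some integers 0 ≤ i < n, 0 ≤ j < m. -/

import Mathlib

local notation "Plane" => EuclideanSpace ℝ (Fin 2)

open Set MeasureTheory
open scoped ENNReal

noncomputable section

/-- The axis-aligned closed box with `x`-range `[a₁,b₁]` and `y`-range `[a₂,b₂]`. -/
def box (a₁ b₁ a₂ b₂ : ℝ) : Set Plane :=
  {x | x 0 ∈ Set.Icc a₁ b₁ ∧ x 1 ∈ Set.Icc a₂ b₂}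

namespace RSPU

/-! ### Points and coordinates -/

def pt (x y : ℝ) : Plane := (WithLp.equiv 2 (Fin 2 → ℝ)).symm ![x, y]

@[simp] lemma pt_apply0 (x y : ℝ) : pt x y 0 = x := rfl
@[simp] lemma pt_apply1 (x y : ℝ) : pt x y 1 = y := rfl

lemma plane_ext {p q : Plane} (h0 : p 0 = q 0) (h1 : p 1 = q 1) : p = q := by
  ext i
  fin_cases i <;> assumption

@[simp] lemma pt_self (p : Plane) : pt (p 0) (p 1) = p := plane_ext rfl rfl

lemma comb_apply0 (c u v : Plane) (s t : ℝ) :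
    (c + s • u + t • v) 0 = c 0 + s * u 0 + t * v 0 := rfl

lemma comb_apply1 (c u v : Plane) (s t : ℝ) :
    (c + s • u + t • v) 1 = c 1 + s * u 1 + t * v 1 := rfl

def obox (a₁ b₁ a₂ b₂ : ℝ) : Set Plane :=
  {x | x 0 ∈ Set.Ioo a₁ b₁ ∧ x 1 ∈ Set.Ioo a₂ b₂}

lemma continuous_eval (i : Fin 2) : Continuous fun x : Plane => x i :=
  (EuclideanSpace.proj i).continuous

lemma isOpen_obox (a₁ b₁ a₂ b₂ : ℝ) : IsOpen (obox a₁ b₁ a₂ b₂) :=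
  ((isOpen_Ioo.preimage (continuous_eval 0)).inter
    (isOpen_Ioo.preimage (continuous_eval 1)))

lemma isClosed_box (a₁ b₁ a₂ b₂ : ℝ) : IsClosed (box a₁ b₁ a₂ b₂) :=
  ((isClosed_Icc.preimage (continuous_eval 0)).inter
    (isClosed_Icc.preimage (continuous_eval 1)))

lemma obox_subset_box (a₁ b₁ a₂ b₂ : ℝ) : obox a₁ b₁ a₂ b₂ ⊆ box a₁ b₁ a₂ b₂ :=
  fun _ hx => ⟨Ioo_subset_Icc_self hx.1, Ioo_subset_Icc_self hx.2⟩

lemma obox_subset_interior (a₁ b₁ a₂ b₂ : ℝ) :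
    obox a₁ b₁ a₂ b₂ ⊆ interior (box a₁ b₁ a₂ b₂) :=
  interior_maximal (obox_subset_box _ _ _ _) (isOpen_obox _ _ _ _)

/-! ### Metric lemmas -/

lemma real_dist_eq (p q : Plane) :
    dist p q = Real.sqrt ((p 0 - q 0)^2 + (p 1 - q 1)^2) := by
  rw [EuclideanSpace.dist_eq]
  congr 1
  rw [Fin.sum_univ_two]
  simp [Real.dist_eq, sq_abs]

lemma abs_coord_sub_le (p q : Plane) (i : Fin 2) : |p i - q i| ≤ dist p q := by
  rw [real_dist_eq, ← Real.sqrt_sq_eq_abs]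
  apply Real.sqrt_le_sqrt
  fin_cases i
  · show (p 0 - q 0)^2 ≤ _
    nlinarith [sq_nonneg (p 1 - q 1)]
  · show (p 1 - q 1)^2 ≤ _
    nlinarith [sq_nonneg (p 0 - q 0)]

lemma dist_le_abs_add_abs (p q : Plane) :
    dist p q ≤ |p 0 - q 0| + |p 1 - q 1| := by
  rw [real_dist_eq]
  rw [show |p 0 - q 0| + |p 1 - q 1| = Real.sqrt ((|p 0 - q 0| + |p 1 - q 1|)^2) by
    rw [Real.sqrt_sq (by positivity)]]
  apply Real.sqrt_le_sqrt
  have := abs_nonneg (p 0 - q 0); have := abs_nonneg (p 1 - q 1)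
  nlinarith [sq_abs (p 0 - q 0), sq_abs (p 1 - q 1)]

/-! ### Compactness and measure of boxes -/

lemma isCompact_box (a₁ b₁ a₂ b₂ : ℝ) : IsCompact (box a₁ b₁ a₂ b₂) := by
  have h : box a₁ b₁ a₂ b₂ = (EuclideanSpace.equiv (Fin 2) ℝ).toHomeomorph ⁻¹'
      (Set.univ.pi fun i => Set.Icc (![a₁, a₂] i) (![b₁, b₂] i)) := by
    ext x
    simp only [box, mem_setOf_eq, mem_preimage, mem_pi, mem_univ, forall_true_left]
    constructor
    · rintro ⟨h0, h1⟩ i; fin_cases i <;> simpa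
    · intro h; exact ⟨by simpa using h 0, by simpa using h 1⟩
  rw [h]
  exact (ContinuousLinearEquiv.toHomeomorph _).isCompact_preimage.mpr
    (isCompact_univ_pi fun i => isCompact_Icc)

lemma box_eq_preimage (a₁ b₁ a₂ b₂ : ℝ) :
    box a₁ b₁ a₂ b₂ = (MeasurableEquiv.toLp 2 (Fin 2 → ℝ)).symm ⁻¹'
      (Set.univ.pi fun i => Set.Icc (![a₁, a₂] i) (![b₁, b₂] i)) := by
  ext x
  simp only [box, mem_setOf_eq, mem_preimage, mem_pi, mem_univ, forall_true_left]
  constructor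
  · rintro ⟨h0, h1⟩ i; fin_cases i <;> simpa
  · intro h; exact ⟨by simpa using h 0, by simpa using h 1⟩

lemma obox_eq_preimage (a₁ b₁ a₂ b₂ : ℝ) :
    obox a₁ b₁ a₂ b₂ = (MeasurableEquiv.toLp 2 (Fin 2 → ℝ)).symm ⁻¹'
      (Set.univ.pi fun i => Set.Ioo (![a₁, a₂] i) (![b₁, b₂] i)) := by
  ext x
  simp only [obox, mem_setOf_eq, mem_preimage, mem_pi, mem_univ, forall_true_left]
  constructor
  · rintro ⟨h0, h1⟩ i; fin_cases i <;> simpa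
  · intro h; exact ⟨by simpa using h 0, by simpa using h 1⟩

lemma volume_box (a₁ b₁ a₂ b₂ : ℝ) :
    volume (box a₁ b₁ a₂ b₂) = ENNReal.ofReal (b₁ - a₁) * ENNReal.ofReal (b₂ - a₂) := by
  rw [box_eq_preimage,
    (EuclideanSpace.volume_preserving_symm_measurableEquiv_toLp (Fin 2)).measure_preimage
      (MeasurableSet.univ_pi fun i => measurableSet_Icc).nullMeasurableSet,
    volume_pi_pi]
  simp [Fin.prod_univ_two, Real.volume_Icc]

lemma volume_obox (a₁ b₁ a₂ b₂ : ℝ) :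
    volume (obox a₁ b₁ a₂ b₂) = ENNReal.ofReal (b₁ - a₁) * ENNReal.ofReal (b₂ - a₂) := by
  rw [obox_eq_preimage,
    (EuclideanSpace.volume_preserving_symm_measurableEquiv_toLp (Fin 2)).measure_preimage
      (MeasurableSet.univ_pi fun i => measurableSet_Ioo).nullMeasurableSet,
    volume_pi_pi]
  simp [Fin.prod_univ_two, Real.volume_Ioo]

/-! ### Isometries -/

lemma isometry_apply (e : Plane ≃ᵢ Plane) (x : Plane) :
    e x = e 0 + e.toRealLinearIsometryEquiv x := by
  simp [IsometryEquiv.toRealLinearIsometryEquiv_apply]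

lemma measurePreserving_isometry (e : Plane ≃ᵢ Plane) :
    MeasurePreserving e volume volume := by
  have h : ⇑e = (fun x => e 0 + x) ∘ ⇑e.toRealLinearIsometryEquiv :=
    funext fun x => isometry_apply e x
  rw [h]
  exact (measurePreserving_add_left volume (e 0)).comp
    e.toRealLinearIsometryEquiv.measurePreserving

lemma volume_image (e : Plane ≃ᵢ Plane) (s : Set Plane) (hs : MeasurableSet s) :
    volume (e '' s) = volume s := by
  have h : e '' s = e.symm ⁻¹' s := by
    ext x
    constructor
    · rintro ⟨y, hy, rfl⟩; simpa using hy
    · intro hx; exact ⟨e.symm x, hx, by simp⟩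
  rw [h]
  exact (measurePreserving_isometry e.symm).measure_preimage hs.nullMeasurableSet

lemma image_interior (e : Plane ≃ᵢ Plane) (s : Set Plane) :
    interior (e '' s) = e '' interior s := (e.toHomeomorph.image_interior s).symm

/-! ### Parametrization of a unit square -/

abbrev K : Set Plane := box 0 1 0 1

def sqC (e : Plane ≃ᵢ Plane) : Plane := e 0
def sqU (e : Plane ≃ᵢ Plane) : Plane := e.toRealLinearIsometryEquiv (pt 1 0)
def sqV (e : Plane ≃ᵢ Plane) : Plane := e.toRealLinearIsometryEquiv (pt 0 1)

lemma pt_eq_smul (s t : ℝ) : pt s t = s • pt 1 0 + t • pt 0 1 := by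
  ext i
  fin_cases i <;> simp [pt]

lemma param_apply (e : Plane ≃ᵢ Plane) (s t : ℝ) :
    e (pt s t) = sqC e + s • sqU e + t • sqV e := by
  rw [pt_eq_smul, isometry_apply, map_add, _root_.map_smul, _root_.map_smul, add_assoc]
  rfl

lemma mem_box_iff (a₁ b₁ a₂ b₂ : ℝ) (p : Plane) :
    p ∈ box a₁ b₁ a₂ b₂ ↔ (a₁ ≤ p 0 ∧ p 0 ≤ b₁) ∧ (a₂ ≤ p 1 ∧ p 1 ≤ b₂) := Iff.rfl

lemma mem_iff (e : Plane ≃ᵢ Plane) (p : Plane) :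
    p ∈ e '' K ↔ ∃ s t : ℝ, s ∈ Icc (0:ℝ) 1 ∧ t ∈ Icc (0:ℝ) 1 ∧
      p = sqC e + s • sqU e + t • sqV e := by
  constructor
  · rintro ⟨x, hx, rfl⟩
    exact ⟨x 0, x 1, hx.1, hx.2, by rw [← param_apply, pt_self]⟩
  · rintro ⟨s, t, hs, ht, rfl⟩
    exact ⟨pt s t, ⟨by simpa using hs, by simpa using ht⟩, (param_apply e s t)⟩

lemma mem_int (e : Plane ≃ᵢ Plane) {s t : ℝ} (hs : s ∈ Ioo (0:ℝ) 1) (ht : t ∈ Ioo (0:ℝ) 1) :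
    sqC e + s • sqU e + t • sqV e ∈ interior (e '' K) := by
  rw [image_interior]
  exact ⟨pt s t, obox_subset_interior 0 1 0 1 ⟨by simpa using hs, by simpa using ht⟩,
    (param_apply e s t)⟩

lemma orth (e : Plane ≃ᵢ Plane) :
    sqU e 0 * sqV e 0 + sqU e 1 * sqV e 1 = 0 := by
  have h := e.toRealLinearIsometryEquiv.inner_map_map (pt 1 0) (pt 0 1)
  rw [PiLp.inner_apply, PiLp.inner_apply, Fin.sum_univ_two, Fin.sum_univ_two] at h
  simp [pt, sqU, sqV, RCLike.inner_apply] at h ⊢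
  linarith

lemma norm_sq (e : Plane ≃ᵢ Plane) (w : Plane) (hw : ‖w‖ = 1) :
    (e.toRealLinearIsometryEquiv w) 0 ^ 2 + (e.toRealLinearIsometryEquiv w) 1 ^ 2 = 1 := by
  have h := e.toRealLinearIsometryEquiv.norm_map w
  rw [hw] at h
  have h2 := congrArg (fun x : ℝ => x ^ 2) h
  rw [EuclideanSpace.norm_eq, Fin.sum_univ_two] at h2
  simp only at h2
  rw [Real.sq_sqrt (by positivity)] at h2
  simpa [sq_abs] using h2

lemma norm_pt10 : ‖pt 1 0‖ = 1 := by
  rw [EuclideanSpace.norm_eq, Fin.sum_univ_two]; simp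

lemma norm_pt01 : ‖pt 0 1‖ = 1 := by
  rw [EuclideanSpace.norm_eq, Fin.sum_univ_two]; simp

lemma sqU_normsq (e : Plane ≃ᵢ Plane) : sqU e 0 ^ 2 + sqU e 1 ^ 2 = 1 :=
  norm_sq e _ norm_pt10

lemma sqV_normsq (e : Plane ≃ᵢ Plane) : sqV e 0 ^ 2 + sqV e 1 ^ 2 = 1 :=
  norm_sq e _ norm_pt01

end RSPU
namespace RSPU

lemma sq_eq_one_cases {x : ℝ} (h : x ^ 2 = 1) : x = 1 ∨ x = -1 := by
  have h2 : (x - 1) * (x + 1) = 0 := by nlinarith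
  rcases mul_eq_zero.mp h2 with h3 | h3
  · left; linarith
  · right; linarith

lemma seg_eq {u₀ : ℝ} (c₀ : ℝ) (hu : u₀ ^ 2 = 1) (x : ℝ) :
    (∃ s ∈ Icc (0:ℝ) 1, x = c₀ + s * u₀) ↔
      x ∈ Icc (min c₀ (c₀ + u₀)) (min c₀ (c₀ + u₀) + 1) := by
  rcases sq_eq_one_cases hu with h | h <;> subst h
  · rw [min_eq_left (by linarith)]
    constructor
    · rintro ⟨s, ⟨hs0, hs1⟩, rfl⟩
      exact ⟨by nlinarith, by nlinarith⟩
    · rintro ⟨h1, h2⟩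
      exact ⟨x - c₀, ⟨by linarith, by linarith⟩, by ring⟩
  · rw [min_eq_right (by linarith)]
    constructor
    · rintro ⟨s, ⟨hs0, hs1⟩, rfl⟩
      constructor <;> nlinarith
    · rintro ⟨h1, h2⟩
      exact ⟨c₀ - x, ⟨by linarith, by linarith⟩, by ring⟩

/-- If one edge direction is horizontal, the square is an axis-aligned box. -/
lemma axis_case (S : Set Plane) (c u v : Plane)
    (hmem : ∀ p : Plane, p ∈ S ↔ ∃ s t : ℝ, s ∈ Icc (0:ℝ) 1 ∧ t ∈ Icc (0:ℝ) 1 ∧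
      p = c + s • u + t • v)
    (hu2 : u 0 ^ 2 = 1) (hu1 : u 1 = 0) (hv0 : v 0 = 0) (hv2 : v 1 ^ 2 = 1) :
    S = box (min (c 0) (c 0 + u 0)) (min (c 0) (c 0 + u 0) + 1)
        (min (c 1) (c 1 + v 1)) (min (c 1) (c 1 + v 1) + 1) := by
  ext p
  rw [hmem, mem_box_iff]
  constructor
  · rintro ⟨s, t, hs, ht, rfl⟩
    have e0 : (c + s • u + t • v) 0 = c 0 + s * u 0 := by
      rw [comb_apply0, hv0]; ring
    have e1 : (c + s • u + t • v) 1 = c 1 + t * v 1 := by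
      rw [comb_apply1, hu1]; ring
    rw [e0, e1]
    exact ⟨(seg_eq (c 0) hu2 _).mp ⟨s, hs, rfl⟩, (seg_eq (c 1) hv2 _).mp ⟨t, ht, rfl⟩⟩
  · rintro ⟨hx, hy⟩
    obtain ⟨s, hs, hsx⟩ := (seg_eq (c 0) hu2 (p 0)).mpr hx
    obtain ⟨t, ht, hty⟩ := (seg_eq (c 1) hv2 (p 1)).mpr hy
    refine ⟨s, t, hs, ht, plane_ext ?_ ?_⟩
    · rw [comb_apply0, hv0, hsx]; ring
    · rw [comb_apply1, hu1, hty]; ring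

/-- Given an axis-aligned box square in corner position, pin down its coordinates. -/
lemma finish_box {n m i j : ℕ} (S : Set Plane) (a b : ℝ)
    (hS : S = box a (a+1) b (b+1))
    (hsub : S ⊆ box 0 n 0 m)
    (hdisjB : ∀ i' j' : ℕ, i' < n → (j' < j ∨ (j' = j ∧ i' < i)) →
      interior S ∩ interior (box (i':ℝ) (i'+1) (j':ℝ) (j'+1)) = ∅)
    (hi : i < n)
    (hq : pt (i:ℝ) (j:ℝ) ∈ S)
    (hy : ∀ p ∈ S, (j:ℝ) ≤ p 1)
    (hnear : ∃ p ∈ S, (i:ℝ) < p 0) :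
    S = box (i:ℝ) (i+1) (j:ℝ) (j+1) := by
  subst hS
  have hcorner : pt a b ∈ box a (a+1) b (b+1) := by
    refine ⟨⟨le_refl _, by norm_num⟩, ⟨le_refl _, by norm_num⟩⟩
  have hbj : (j:ℝ) ≤ b := by simpa using hy _ hcorner
  have hq0 : a ≤ (i:ℝ) ∧ (i:ℝ) ≤ a + 1 := by simpa using hq.1
  have hq1 : b ≤ (j:ℝ) := by simpa using hq.2.1
  have hb : b = (j:ℝ) := le_antisymm hq1 hbj
  have ha0 : (0:ℝ) ≤ a := by simpa using (hsub hcorner).1.1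
  obtain ⟨p, hp, hpi⟩ := hnear
  have hai : (i:ℝ) < a + 1 := lt_of_lt_of_le hpi (by simpa using hp.1.2)
  have ha : a = (i:ℝ) := by
    by_contra hne
    have halt : a < (i:ℝ) := lt_of_le_of_ne hq0.1 hne
    have hi1 : 1 ≤ i := by
      rcases Nat.eq_zero_or_pos i with h0 | h0
      · exfalso; rw [h0] at halt; push_cast at halt; linarith
      · exact h0
    have hdisj := hdisjB (i-1) j (by omega) (Or.inr ⟨rfl, by omega⟩)
    rw [Set.eq_empty_iff_forall_notMem] at hdisj
    have hcast : ((i-1 : ℕ) : ℝ) = (i:ℝ) - 1 := by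
      push_cast [Nat.cast_sub hi1]; ring
    have hz0 : (pt ((a+(i:ℝ))/2) ((j:ℝ)+1/2)) 0 = (a+(i:ℝ))/2 := rfl
    have hz1 : (pt ((a+(i:ℝ))/2) ((j:ℝ)+1/2)) 1 = (j:ℝ)+1/2 := rfl
    refine hdisj (pt ((a+(i:ℝ))/2) ((j:ℝ)+1/2)) ⟨?_, ?_⟩
    · apply obox_subset_interior
      rw [hb]
      exact ⟨⟨by rw [hz0]; linarith, by rw [hz0]; linarith⟩,
        ⟨by rw [hz1]; linarith, by rw [hz1]; linarith⟩⟩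
    · apply obox_subset_interior
      rw [hcast]
      exact ⟨⟨by rw [hz0]; linarith, by rw [hz0]; linarith⟩,
        ⟨by rw [hz1]; linarith, by rw [hz1]; linarith⟩⟩
  rw [ha, hb]

/-- The rotated-vertex case is impossible. -/
lemma vertex_contra {n m i j : ℕ} (S : Set Plane)
    (hsub : S ⊆ box 0 n 0 m)
    (hdisjB : ∀ i' j' : ℕ, i' < n → (j' < j ∨ (j' = j ∧ i' < i)) →
      interior S ∩ interior (box (i':ℝ) (i'+1) (j':ℝ) (j'+1)) = ∅)
    (hi : i < n)
    (w w' : Plane)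
    (hint : ∀ α β : ℝ, 0 < α → α < 1 → 0 < β → β < 1 →
      pt (i:ℝ) (j:ℝ) + α • w + β • w' ∈ interior S)
    (hw0 : w 0 < 0) (hw'0 : 0 < w' 0) (hw1 : 0 < w 1) (hw'1 : 0 < w' 1)
    (hwn : w 0 ^ 2 + w 1 ^ 2 = 1) (hw'n : w' 0 ^ 2 + w' 1 ^ 2 = 1) : False := by
  have hw0ge : -1 ≤ w 0 := by nlinarith
  have hw1le : w 1 ≤ 1 := by nlinarith
  have hw'1le : w' 1 ≤ 1 := by nlinarith
  have hε'pos : 0 < min (-w 0 / (4 * w' 0)) (1/4) :=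
    lt_min (div_pos (by linarith) (by linarith)) (by norm_num)
  have hε'le : min (-w 0 / (4 * w' 0)) (1/4) ≤ 1/4 := min_le_right _ _
  have hkey : min (-w 0 / (4 * w' 0)) (1/4) * w' 0 ≤ -w 0 / 4 := by
    have h2 : min (-w 0 / (4 * w' 0)) (1/4) * w' 0 ≤ (-w 0 / (4 * w' 0)) * w' 0 :=
      mul_le_mul_of_nonneg_right (min_le_left _ _) (le_of_lt hw'0)
    have h3 : (-w 0 / (4 * w' 0)) * w' 0 = -w 0 / 4 := by
      field_simp
    linarith
  have hprod1 : 0 < min (-w 0 / (4 * w' 0)) (1/4) * w' 0 := mul_pos hε'pos hw'0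
  have hprod2 : 0 < min (-w 0 / (4 * w' 0)) (1/4) * w' 1 := mul_pos hε'pos hw'1
  have hprod3 : min (-w 0 / (4 * w' 0)) (1/4) * w' 1 ≤ 1/4 :=
    le_trans (mul_le_mul hε'le hw'1le (le_of_lt hw'1) (by norm_num)) (by norm_num)
  have hzint := hint (1/2) (min (-w 0 / (4 * w' 0)) (1/4)) (by norm_num) (by norm_num)
    hε'pos (by linarith)
  have hz0 : (pt (i:ℝ) (j:ℝ) + (1/2 : ℝ) • w + (min (-w 0 / (4 * w' 0)) (1/4)) • w') 0
      = (i:ℝ) + (1/2) * w 0 + min (-w 0 / (4 * w' 0)) (1/4) * w' 0 :=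
    comb_apply0 _ _ _ _ _
  have hz1 : (pt (i:ℝ) (j:ℝ) + (1/2 : ℝ) • w + (min (-w 0 / (4 * w' 0)) (1/4)) • w') 1
      = (j:ℝ) + (1/2) * w 1 + min (-w 0 / (4 * w' 0)) (1/4) * w' 1 :=
    comb_apply1 _ _ _ _ _
  rcases Nat.eq_zero_or_pos i with h0 | h0
  · have hge : (0:ℝ) ≤ (pt (i:ℝ) (j:ℝ) + (1/2 : ℝ) • w
        + (min (-w 0 / (4 * w' 0)) (1/4)) • w') 0 :=
      (hsub (interior_subset hzint)).1.1
    rw [hz0, h0] at hge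
    push_cast at hge
    nlinarith
  · have hdisj := hdisjB (i-1) j (by omega) (Or.inr ⟨rfl, by omega⟩)
    rw [Set.eq_empty_iff_forall_notMem] at hdisj
    have hcast : ((i-1 : ℕ) : ℝ) = (i:ℝ) - 1 := by
      push_cast [Nat.cast_sub h0]; ring
    refine hdisj _ ⟨hzint, ?_⟩
    apply obox_subset_interior
    rw [hcast]
    refine ⟨⟨?_, ?_⟩, ⟨?_, ?_⟩⟩
    · rw [hz0]; linarith
    · rw [hz0]; linarith
    · rw [hz1]; linarith
    · rw [hz1]; linarith

end RSPU
namespace RSPU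

@[simp] lemma neg_coord (u : Plane) (i : Fin 2) : (-u) i = -(u i) := rfl

/-- Common contradiction: a genuinely rotated square with lowest vertex `(i,j)`. -/
lemma caseC {n m i j : ℕ} (S : Set Plane)
    (hsub : S ⊆ box 0 n 0 m)
    (hdisjB : ∀ i' j' : ℕ, i' < n → (j' < j ∨ (j' = j ∧ i' < i)) →
      interior S ∩ interior (box (i':ℝ) (i'+1) (j':ℝ) (j'+1)) = ∅)
    (hi : i < n)
    (U V : Plane)
    (hU1 : 0 < U 1) (hV1 : 0 < V 1)
    (hUn : U 0 ^ 2 + U 1 ^ 2 = 1) (hVn : V 0 ^ 2 + V 1 ^ 2 = 1)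
    (horth : U 0 * V 0 + U 1 * V 1 = 0)
    (hmemint : ∀ α β : ℝ, 0 < α → α < 1 → 0 < β → β < 1 →
      pt (i:ℝ) (j:ℝ) + α • U + β • V ∈ interior S) : False := by
  have hprod : U 0 * V 0 < 0 := by nlinarith
  rcases lt_trichotomy (U 0) 0 with hU0 | hU0 | hU0
  · have hV0 : 0 < V 0 := by nlinarith
    exact vertex_contra S hsub hdisjB hi U V hmemint hU0 hV0 hU1 hV1 hUn hVn
  · rw [hU0] at hprod; nlinarith
  · have hV0 : V 0 < 0 := by nlinarith
    refine vertex_contra S hsub hdisjB hi V U ?_ hV0 hU0 hV1 hU1 hVn hUn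
    intro α β h1 h2 h3 h4
    have h := hmemint β α h3 h4 h1 h2
    rwa [add_right_comm] at h

set_option maxHeartbeats 2000000 in
/-- The key geometric lemma: a unit square sitting in the corner region is the grid cell. -/
lemma core {n m : ℕ} (e : Plane ≃ᵢ Plane) (i j : ℕ) (hi : i < n) (hj : j < m)
    (hsub : e '' K ⊆ box 0 n 0 m)
    (hdisjB : ∀ i' j' : ℕ, i' < n → (j' < j ∨ (j' = j ∧ i' < i)) →
      interior (e '' K) ∩ interior (box (i':ℝ) (i'+1) (j':ℝ) (j'+1)) = ∅)
    (hq : pt (i:ℝ) (j:ℝ) ∈ e '' K)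
    (hnear : ∀ ε : ℝ, 0 < ε → ∃ p ∈ e '' K,
      (i:ℝ) < p 0 ∧ (j:ℝ) < p 1 ∧ dist p (pt (i:ℝ) (j:ℝ)) < ε) :
    e '' K = box (i:ℝ) (i+1) (j:ℝ) (j+1) := by
  -- Step 1: the square lies in the upper half-plane y ≥ j
  have hy : ∀ p ∈ e '' K, (j:ℝ) ≤ p 1 := by
    by_contra hcon
    push_neg at hcon
    obtain ⟨p, hp, hpj⟩ := hcon
    obtain ⟨x, hxK, hex⟩ := hp
    obtain ⟨⟨hx00, hx01⟩, ⟨hx10, hx11⟩⟩ := hxK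
    have hδ0 : 0 < min (1/2) (((j:ℝ) - p 1)/2) := lt_min (by norm_num) (by linarith)
    have hδle : min (1/2) (((j:ℝ) - p 1)/2) ≤ 1/2 := min_le_left _ _
    have hδle2 : min (1/2) (((j:ℝ) - p 1)/2) ≤ ((j:ℝ) - p 1)/2 := min_le_right _ _
    set δ := min (1/2) (((j:ℝ) - p 1)/2) with hδdef
    -- a perturbed interior point of the parameter square
    have hone : (0:ℝ) ≤ 1 - δ := by linarith
    have hx'obox : pt (x 0 + δ*(1/2 - x 0)) (x 1 + δ*(1/2 - x 1)) ∈ obox 0 1 0 1 := by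
      refine ⟨⟨?_, ?_⟩, ⟨?_, ?_⟩⟩
      · show (0:ℝ) < x 0 + δ*(1/2 - x 0)
        nlinarith [mul_nonneg hone hx00]
      · show x 0 + δ*(1/2 - x 0) < 1
        nlinarith [mul_le_mul_of_nonneg_left hx01 hone]
      · show (0:ℝ) < x 1 + δ*(1/2 - x 1)
        nlinarith [mul_nonneg hone hx10]
      · show x 1 + δ*(1/2 - x 1) < 1
        nlinarith [mul_le_mul_of_nonneg_left hx11 hone]
    set x' := pt (x 0 + δ*(1/2 - x 0)) (x 1 + δ*(1/2 - x 1)) with hx'def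
    have hdistx : dist x' x ≤ δ := by
      have h0 : x' 0 - x 0 = δ*(1/2 - x 0) := by rw [hx'def, pt_apply0]; ring
      have h1 : x' 1 - x 1 = δ*(1/2 - x 1) := by rw [hx'def, pt_apply1]; ring
      have ha0 : |x' 0 - x 0| ≤ δ/2 := by
        rw [h0, abs_mul, abs_of_pos hδ0]
        have : |1/2 - x 0| ≤ 1/2 := abs_le.mpr ⟨by linarith, by linarith⟩
        nlinarith
      have ha1 : |x' 1 - x 1| ≤ δ/2 := by
        rw [h1, abs_mul, abs_of_pos hδ0]
        have : |1/2 - x 1| ≤ 1/2 := abs_le.mpr ⟨by linarith, by linarith⟩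
        nlinarith
      calc dist x' x ≤ |x' 0 - x 0| + |x' 1 - x 1| := dist_le_abs_add_abs _ _
        _ ≤ δ := by linarith
    have hp₀int : e x' ∈ interior (e '' K) := by
      rw [image_interior]
      exact ⟨x', obox_subset_interior 0 1 0 1 hx'obox, rfl⟩
    have hdist2 : dist (e x') p = dist x' x := by
      rw [← hex]
      exact e.dist_eq x' x
    have hylt : (e x') 1 < (j:ℝ) := by
      have h := abs_coord_sub_le (e x') p 1
      rw [hdist2] at h
      have h2 : (e x') 1 - p 1 ≤ δ := le_trans (le_abs_self _) (le_trans h hdistx)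
      linarith
    obtain ⟨r, hr0, hball⟩ := Metric.isOpen_iff.mp isOpen_interior (e x') hp₀int
    have hr'0 : 0 < min r ((j:ℝ) - (e x') 1) := lt_min hr0 (by linarith)
    set r' := min r ((j:ℝ) - (e x') 1) with hr'def
    have hr'r : r' ≤ r := min_le_left _ _
    have hr'y : r' ≤ (j:ℝ) - (e x') 1 := min_le_right _ _
    obtain ⟨X, hXirr, hX1, hX2⟩ :=
      exists_irrational_btwn (show (e x') 0 < (e x') 0 + r'/2 by linarith)
    obtain ⟨Y, hYirr, hY1, hY2⟩ :=
      exists_irrational_btwn (show (e x') 1 < min ((e x') 1 + r'/2) (j:ℝ) from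
        lt_min (by linarith) hylt)
    have hY2a : Y < (e x') 1 + r'/2 := lt_of_lt_of_le hY2 (min_le_left _ _)
    have hYj : Y < (j:ℝ) := lt_of_lt_of_le hY2 (min_le_right _ _)
    have hwd : dist (pt X Y) (e x') < r := by
      have h := dist_le_abs_add_abs (pt X Y) (e x')
      rw [pt_apply0, pt_apply1] at h
      have h0 : |X - (e x') 0| < r'/2 := by rw [abs_of_pos (by linarith)]; linarith
      have h1 : |Y - (e x') 1| < r'/2 := by rw [abs_of_pos (by linarith)]; linarith
      linarith
    have hwint : pt X Y ∈ interior (e '' K) := hball (Metric.mem_ball.mpr hwd)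
    have hwbox := hsub (interior_subset hwint)
    have hX0 : (0:ℝ) ≤ X := hwbox.1.1
    have hXn : X < (n:ℝ) := by
      have hle : X ≤ (n:ℝ) := hwbox.1.2
      have hne : X ≠ (n:ℝ) := by
        have := hXirr.ne_int (n:ℤ)
        push_cast at this
        exact this
      exact lt_of_le_of_ne hle hne
    set I := (⌊X⌋).toNat with hIdef
    set J := (⌊Y⌋).toNat with hJdef
    have hIr : (I:ℝ) = (⌊X⌋:ℝ) := by
      have := Int.toNat_of_nonneg (Int.floor_nonneg.mpr hX0)
      exact_mod_cast congrArg (fun z : ℤ => (z:ℝ)) this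
    have hY0 : (0:ℝ) ≤ Y := hwbox.2.1
    have hJr : (J:ℝ) = (⌊Y⌋:ℝ) := by
      have := Int.toNat_of_nonneg (Int.floor_nonneg.mpr hY0)
      exact_mod_cast congrArg (fun z : ℤ => (z:ℝ)) this
    have hIX : (I:ℝ) < X := by
      rw [hIr]
      exact lt_of_le_of_ne (Int.floor_le X) (Ne.symm (hXirr.ne_int ⌊X⌋))
    have hXI : X < (I:ℝ) + 1 := by rw [hIr]; exact_mod_cast Int.lt_floor_add_one X
    have hJY : (J:ℝ) < Y := by
      rw [hJr]
      exact lt_of_le_of_ne (Int.floor_le Y) (Ne.symm (hYirr.ne_int ⌊Y⌋))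
    have hYJ : Y < (J:ℝ) + 1 := by rw [hJr]; exact_mod_cast Int.lt_floor_add_one Y
    have hIn : I < n := by
      have : (I:ℝ) < (n:ℝ) := lt_trans hIX hXn
      exact_mod_cast this
    have hJj : J < j := by
      have : (J:ℝ) < (j:ℝ) := lt_trans hJY hYj
      exact_mod_cast this
    have hdisj := hdisjB I J hIn (Or.inl hJj)
    rw [Set.eq_empty_iff_forall_notMem] at hdisj
    exact hdisj (pt X Y) ⟨hwint, obox_subset_interior _ _ _ _
      ⟨⟨hIX, hXI⟩, ⟨hJY, hYJ⟩⟩⟩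
  -- Step 2: parametrize and analyze the corner
  obtain ⟨s₀, t₀, hs₀, ht₀, hqeq⟩ := (mem_iff e _).mp hq
  have hparam : ∀ s t : ℝ, s ∈ Icc (0:ℝ) 1 → t ∈ Icc (0:ℝ) 1 →
      (j:ℝ) ≤ sqC e 1 + s * sqU e 1 + t * sqV e 1 := by
    intro s t hs ht
    have hm : sqC e + s • sqU e + t • sqV e ∈ e '' K := (mem_iff e _).mpr ⟨s, t, hs, ht, rfl⟩
    have h := hy _ hm
    rwa [comb_apply1] at h
  have hqy : sqC e 1 + s₀ * sqU e 1 + t₀ * sqV e 1 = (j:ℝ) := by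
    have h : (j:ℝ) = (sqC e + s₀ • sqU e + t₀ • sqV e) 1 := by
      rw [← hqeq, pt_apply1]
    rw [comb_apply1] at h
    linarith
  by_cases hu1 : sqU e 1 = 0
  · -- axis-aligned, horizontal u
    have hu02 : sqU e 0 ^ 2 = 1 := by have h := sqU_normsq e; nlinarith
    have hu0ne : sqU e 0 ≠ 0 := by
      intro h; rw [h] at hu02; norm_num at hu02
    have hv0 : sqV e 0 = 0 := by
      have h := orth e
      rw [hu1] at h
      rcases mul_eq_zero.mp (by linarith : sqU e 0 * sqV e 0 = 0) with h' | h'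
      · exact absurd h' hu0ne
      · exact h'
    have hv12 : sqV e 1 ^ 2 = 1 := by have h := sqV_normsq e; nlinarith
    have hbox := axis_case (e '' K) (sqC e) (sqU e) (sqV e)
      (fun p => mem_iff e p) hu02 hu1 hv0 hv12
    obtain ⟨p, hp, hpi, -, -⟩ := hnear 1 one_pos
    exact finish_box (e '' K) _ _ hbox hsub hdisjB hi hq hy ⟨p, hp, hpi⟩
  by_cases hv1 : sqV e 1 = 0
  · -- axis-aligned, horizontal v
    have hv02 : sqV e 0 ^ 2 = 1 := by have h := sqV_normsq e; nlinarith
    have hv0ne : sqV e 0 ≠ 0 := by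
      intro h; rw [h] at hv02; norm_num at hv02
    have hu0 : sqU e 0 = 0 := by
      have h := orth e
      rw [hv1] at h
      rcases mul_eq_zero.mp (by linarith : sqU e 0 * sqV e 0 = 0) with h' | h'
      · exact h'
      · exact absurd h' hv0ne
    have hu12 : sqU e 1 ^ 2 = 1 := by have h := sqU_normsq e; nlinarith
    have hmem' : ∀ p : Plane, p ∈ e '' K ↔ ∃ s t : ℝ, s ∈ Icc (0:ℝ) 1 ∧ t ∈ Icc (0:ℝ) 1 ∧
        p = sqC e + s • sqV e + t • sqU e := by
      intro p
      rw [mem_iff]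
      constructor
      · rintro ⟨s, t, hs, ht, rfl⟩
        exact ⟨t, s, ht, hs, add_right_comm _ _ _⟩
      · rintro ⟨s, t, hs, ht, rfl⟩
        exact ⟨t, s, ht, hs, add_right_comm _ _ _⟩
    have hbox := axis_case (e '' K) (sqC e) (sqV e) (sqU e)
      hmem' hv02 hv1 hu0 hu12
    obtain ⟨p, hp, hpi, -, -⟩ := hnear 1 one_pos
    exact finish_box (e '' K) _ _ hbox hsub hdisjB hi hq hy ⟨p, hp, hpi⟩
  · -- genuinely rotated: contradiction
    exfalso
    have hs₀u : s₀ * sqU e 1 ≤ 0 := by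
      have h := hparam 0 t₀ ⟨le_refl _, zero_le_one⟩ ht₀
      nlinarith
    have h1s₀u : 0 ≤ (1 - s₀) * sqU e 1 := by
      have h := hparam 1 t₀ ⟨zero_le_one, le_refl _⟩ ht₀
      nlinarith
    have ht₀v : t₀ * sqV e 1 ≤ 0 := by
      have h := hparam s₀ 0 hs₀ ⟨le_refl _, zero_le_one⟩
      nlinarith
    have h1t₀v : 0 ≤ (1 - t₀) * sqV e 1 := by
      have h := hparam s₀ 1 hs₀ ⟨zero_le_one, le_refl _⟩
      nlinarith
    have hUn := sqU_normsq e
    have hVn := sqV_normsq e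
    have horth := orth e
    rcases lt_trichotomy (sqU e 1) 0 with hult | h | hugt
    · have hs1 : s₀ = 1 := by nlinarith [hs₀.1, hs₀.2]
      subst hs1
      rcases lt_trichotomy (sqV e 1) 0 with hvlt | h | hvgt
      · have ht1 : t₀ = 1 := by nlinarith [ht₀.1, ht₀.2]
        subst ht1
        refine caseC (e '' K) hsub hdisjB hi (-sqU e) (-sqV e)
          (by rw [neg_coord]; linarith) (by rw [neg_coord]; linarith)
          (by rw [neg_coord, neg_coord]; nlinarith)
          (by rw [neg_coord, neg_coord]; nlinarith)
          (by rw [neg_coord, neg_coord, neg_coord, neg_coord]; linear_combination horth)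
          ?_
        intro α β h1 h2 h3 h4
        have heq : pt (i:ℝ) (j:ℝ) + α • (-sqU e) + β • (-sqV e)
            = sqC e + (1 - α) • sqU e + (1 - β) • sqV e := by
          rw [hqeq]; module
        rw [heq]
        exact mem_int e ⟨by linarith, by linarith⟩ ⟨by linarith, by linarith⟩
      · exact hv1 h
      · have ht0 : t₀ = 0 := by nlinarith [ht₀.1, ht₀.2]
        subst ht0
        refine caseC (e '' K) hsub hdisjB hi (-sqU e) (sqV e)
          (by rw [neg_coord]; linarith) hvgt
          (by rw [neg_coord, neg_coord]; nlinarith) hVn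
          (by rw [neg_coord, neg_coord]; linear_combination -horth)
          ?_
        intro α β h1 h2 h3 h4
        have heq : pt (i:ℝ) (j:ℝ) + α • (-sqU e) + β • (sqV e)
            = sqC e + (1 - α) • sqU e + β • sqV e := by
          rw [hqeq]; module
        rw [heq]
        exact mem_int e ⟨by linarith, by linarith⟩ ⟨by linarith, by linarith⟩
    · exact hu1 h
    · have hs0 : s₀ = 0 := by nlinarith [hs₀.1, hs₀.2]
      subst hs0
      rcases lt_trichotomy (sqV e 1) 0 with hvlt | h | hvgt
      · have ht1 : t₀ = 1 := by nlinarith [ht₀.1, ht₀.2]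
        subst ht1
        refine caseC (e '' K) hsub hdisjB hi (sqU e) (-sqV e)
          hugt (by rw [neg_coord]; linarith)
          hUn (by rw [neg_coord, neg_coord]; nlinarith)
          (by rw [neg_coord, neg_coord]; linear_combination -horth)
          ?_
        intro α β h1 h2 h3 h4
        have heq : pt (i:ℝ) (j:ℝ) + α • (sqU e) + β • (-sqV e)
            = sqC e + α • sqU e + (1 - β) • sqV e := by
          rw [hqeq]; module
        rw [heq]
        exact mem_int e ⟨by linarith, by linarith⟩ ⟨by linarith, by linarith⟩
      · exact hv1 h
      · have ht0 : t₀ = 0 := by nlinarith [ht₀.1, ht₀.2]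
        subst ht0
        refine caseC (e '' K) hsub hdisjB hi (sqU e) (sqV e)
          hugt hvgt hUn hVn horth ?_
        intro α β h1 h2 h3 h4
        have heq : pt (i:ℝ) (j:ℝ) + α • (sqU e) + β • (sqV e)
            = sqC e + α • sqU e + β • sqV e := by
          rw [hqeq]; module
        rw [heq]
        exact mem_int e ⟨by linarith, by linarith⟩ ⟨by linarith, by linarith⟩

end RSPU
namespace RSPU

lemma mem_box_corner (x y : ℝ) : pt x y ∈ box x (x+1) y (y+1) :=
  ⟨⟨le_refl _, by norm_num⟩, ⟨le_refl _, by norm_num⟩⟩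

section Main

variable {n m : ℕ} (f : Fin (n * m) → (Plane ≃ᵢ Plane))

lemma volume_int (a : Fin (n*m)) : volume (interior (f a '' K)) = 1 := by
  rw [image_interior, volume_image _ _ measurableSet_interior]
  have h1 : volume (obox (0:ℝ) 1 0 1) = 1 := by rw [volume_obox]; norm_num
  have h2 : volume (K) = 1 := by rw [volume_box]; norm_num
  have hle : volume (interior K) ≤ 1 := h2 ▸ measure_mono interior_subset
  have hge : (1:ℝ≥0∞) ≤ volume (interior K) :=
    h1 ▸ measure_mono (obox_subset_interior 0 1 0 1)
  exact le_antisymm hle hge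

lemma isClosed_sq (a : Fin (n*m)) : IsClosed (f a '' K) :=
  (((isCompact_box 0 1 0 1).image (f a).continuous).isClosed)

lemma coverage (hsub : ∀ a, f a '' K ⊆ box 0 n 0 m)
    (hdisj : ∀ a b, a ≠ b → interior (f a '' K) ∩ interior (f b '' K) = ∅) :
    obox 0 n 0 m ⊆ ⋃ a, f a '' K := by
  have hUc : IsClosed (⋃ a, f a '' K) := isClosed_iUnion_of_finite (isClosed_sq f)
  have hGopen : IsOpen (obox 0 n 0 m \ ⋃ a, f a '' K) := (isOpen_obox _ _ _ _).sdiff hUc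
  have hvols : volume (⋃ a, interior (f a '' K)) = ((n*m : ℕ) : ℝ≥0∞) := by
    rw [measure_iUnion (fun a b hab => Set.disjoint_iff_inter_eq_empty.mpr (hdisj a b hab))
      (fun a => measurableSet_interior)]
    have h := volume_int f
    simp [h, tsum_fintype]
  have hsubU : (⋃ a, interior (f a '' K)) ⊆ box 0 n 0 m :=
    iUnion_subset fun a => subset_trans interior_subset (hsub a)
  have hrect : volume (box (0:ℝ) n 0 m) = ((n*m : ℕ) : ℝ≥0∞) := by
    rw [volume_box, sub_zero, sub_zero, ENNReal.ofReal_natCast, ENNReal.ofReal_natCast]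
    norm_cast
  have hdiff : volume (box (0:ℝ) n 0 m \ ⋃ a, interior (f a '' K)) = 0 := by
    rw [measure_diff hsubU
      (MeasurableSet.iUnion fun a => measurableSet_interior).nullMeasurableSet
      (by rw [hvols]; exact ENNReal.natCast_ne_top _), hvols, hrect, tsub_self]
  have hGsub : (obox 0 n 0 m \ ⋃ a, f a '' K) ⊆
      (box (0:ℝ) n 0 m \ ⋃ a, interior (f a '' K)) := by
    rintro x ⟨hx1, hx2⟩
    refine ⟨obox_subset_box _ _ _ _ hx1, fun hx3 => hx2 ?_⟩
    obtain ⟨a, hxa⟩ := mem_iUnion.mp hx3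
    exact mem_iUnion.mpr ⟨a, interior_subset hxa⟩
  have hG0 : volume (obox 0 n 0 m \ ⋃ a, f a '' K) = 0 := measure_mono_null hGsub hdiff
  have hGempty := hGopen.eq_empty_of_measure_zero hG0
  intro x hx
  by_contra hnx
  have hmem : x ∈ obox 0 (n:ℝ) 0 m \ ⋃ a, f a '' K := ⟨hx, hnx⟩
  rw [hGempty] at hmem
  exact hmem

lemma exists_sq (hsub : ∀ a, f a '' K ⊆ box 0 n 0 m)
    (hdisj : ∀ a b, a ≠ b → interior (f a '' K) ∩ interior (f b '' K) = ∅)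
    (hn : 0 < n) (hm : 0 < m) (i j : ℕ) (hi : i < n) (hj : j < m) :
    ∃ a, pt (i:ℝ) (j:ℝ) ∈ f a '' K ∧ ∀ ε : ℝ, 0 < ε → ∃ p ∈ f a '' K,
      (i:ℝ) < p 0 ∧ (j:ℝ) < p 1 ∧ dist p (pt (i:ℝ) (j:ℝ)) < ε := by
  have hcover := coverage f hsub hdisj
  haveI hne : Nonempty (Fin (n*m)) := Fin.pos_iff_nonempty.mp (Nat.mul_pos hn hm)
  have hfreq : ∃ a : Fin (n*m), ∀ ε : ℝ, 0 < ε →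
      ∃ t : ℝ, (0 < t ∧ t < ε ∧ t < 1) ∧ pt ((i:ℝ)+t) ((j:ℝ)+t) ∈ f a '' K := by
    by_contra hcon
    push_neg at hcon
    choose g hg0 hg using hcon
    have hinf0 : 0 < Finset.univ.inf' Finset.univ_nonempty g :=
      (Finset.lt_inf'_iff _).mpr fun b _ => hg0 b
    set t := min (Finset.univ.inf' Finset.univ_nonempty g) 1 / 2 with htdef
    have ht0 : 0 < t := by
      apply div_pos (lt_min hinf0 one_pos) (by norm_num)
    have ht1 : t < 1 := by
      have : min (Finset.univ.inf' Finset.univ_nonempty g) 1 ≤ 1 := min_le_right _ _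
      rw [htdef]; linarith
    have htg : ∀ a : Fin (n*m), t < g a := by
      intro a
      have h1 : min (Finset.univ.inf' Finset.univ_nonempty g) 1 ≤
          Finset.univ.inf' Finset.univ_nonempty g := min_le_left _ _
      have h2 : Finset.univ.inf' Finset.univ_nonempty g ≤ g a :=
        Finset.inf'_le g (Finset.mem_univ a)
      rw [htdef]; linarith [lt_min hinf0 one_pos]
    have hmem : pt ((i:ℝ)+t) ((j:ℝ)+t) ∈ obox 0 n 0 m := by
      have hin : (i:ℝ) + 1 ≤ n := by exact_mod_cast Nat.succ_le_of_lt hi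
      have hjm : (j:ℝ) + 1 ≤ m := by exact_mod_cast Nat.succ_le_of_lt hj
      have hi0 : (0:ℝ) ≤ i := Nat.cast_nonneg i
      have hj0 : (0:ℝ) ≤ j := Nat.cast_nonneg j
      exact ⟨⟨by rw [pt_apply0]; linarith, by rw [pt_apply0]; linarith⟩,
        ⟨by rw [pt_apply1]; linarith, by rw [pt_apply1]; linarith⟩⟩
    obtain ⟨a, hxa⟩ := mem_iUnion.mp (hcover hmem)
    exact hg a t ⟨ht0, htg a, ht1⟩ hxa
  obtain ⟨a, ha⟩ := hfreq
  have hdist : ∀ t : ℝ, 0 < t →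
      dist (pt ((i:ℝ)+t) ((j:ℝ)+t)) (pt (i:ℝ) (j:ℝ)) ≤ 2*t := by
    intro t ht
    have h := dist_le_abs_add_abs (pt ((i:ℝ)+t) ((j:ℝ)+t)) (pt (i:ℝ) (j:ℝ))
    rw [pt_apply0, pt_apply1, pt_apply0, pt_apply1] at h
    have h1 : |(i:ℝ) + t - i| = t := by rw [show (i:ℝ) + t - i = t by ring, abs_of_pos ht]
    have h2 : |(j:ℝ) + t - j| = t := by rw [show (j:ℝ) + t - j = t by ring, abs_of_pos ht]
    rw [h1, h2] at h
    linarith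
  refine ⟨a, ?_, ?_⟩
  · rw [← (isClosed_sq f a).closure_eq]
    rw [Metric.mem_closure_iff]
    intro ε hε
    obtain ⟨t, ⟨ht0, htε, ht1⟩, htm⟩ := ha (ε/4) (by linarith)
    refine ⟨pt ((i:ℝ)+t) ((j:ℝ)+t), htm, ?_⟩
    rw [dist_comm]
    calc dist (pt ((i:ℝ)+t) ((j:ℝ)+t)) (pt (i:ℝ) (j:ℝ)) ≤ 2*t := hdist t ht0
      _ < ε := by linarith
  · intro ε hε
    obtain ⟨t, ⟨ht0, htε, ht1⟩, htm⟩ := ha (ε/4) (by linarith)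
    refine ⟨pt ((i:ℝ)+t) ((j:ℝ)+t), htm, ?_, ?_, ?_⟩
    · rw [pt_apply0]; linarith
    · rw [pt_apply1]; linarith
    · calc dist (pt ((i:ℝ)+t) ((j:ℝ)+t)) (pt (i:ℝ) (j:ℝ)) ≤ 2*t := hdist t ht0
        _ < ε := by linarith

lemma cells (hsub : ∀ a, f a '' K ⊆ box 0 n 0 m)
    (hdisj : ∀ a b, a ≠ b → interior (f a '' K) ∩ interior (f b '' K) = ∅)
    (hn : 0 < n) (hm : 0 < m) :
    ∀ N i j : ℕ, i < n → j < m → j * n + i < N →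
      ∃ a, f a '' K = box (i:ℝ) (i+1) (j:ℝ) (j+1) := by
  intro N
  induction N with
  | zero => intro i j _ _ h; omega
  | succ N ih =>
    intro i j hi hj hlt
    obtain ⟨a, hqa, hneara⟩ := exists_sq f hsub hdisj hn hm i j hi hj
    refine ⟨a, core (f a) i j hi hj (hsub a) ?_ hqa hneara⟩
    intro i' j' hi' hcov
    have hj'm : j' < m := by
      rcases hcov with h | ⟨rfl, h⟩
      · omega
      · exact hj
    have hlt' : j' * n + i' < N := by
      have hN : j * n + i ≤ N := Nat.lt_succ_iff.mp hlt
      rcases hcov with h | ⟨rfl, h⟩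
      · have h1 : j' * n + i' < j' * n + n := by omega
        have h2 : j' * n + n = (j' + 1) * n := by ring
        have h3 : (j' + 1) * n ≤ j * n := Nat.mul_le_mul_right n (Nat.succ_le_of_lt h)
        omega
      · omega
    obtain ⟨b, hb⟩ := ih i' j' hi' hj'm hlt'
    have hab : a ≠ b := by
      intro heq
      obtain ⟨p, hp, hpi, hpj, -⟩ := hneara 1 one_pos
      rw [heq, hb] at hp
      rcases hcov with h' | ⟨rfl, h'⟩
      · have h1 : p 1 ≤ (j':ℝ) + 1 := hp.2.2
        have h2 : ((j':ℝ) + 1) ≤ (j:ℝ) := by exact_mod_cast Nat.succ_le_of_lt h'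
        linarith
      · have h1 : p 0 ≤ (i':ℝ) + 1 := hp.1.2
        have h2 : ((i':ℝ) + 1) ≤ (i:ℝ) := by exact_mod_cast Nat.succ_le_of_lt h'
        linarith
    rw [← hb]
    exact hdisj a b hab

end Main

end RSPU
end

theorem rotated_squares_packing_unique (n m : ℕ) (hn : 0 < n) (hm : 0 < m)
    (f : Fin (n * m) → (Plane ≃ᵢ Plane))
    (hsub : ∀ i, f i '' box 0 1 0 1 ⊆ box 0 n 0 m)
    (hdisj : ∀ i j, i ≠ j →
      interior (f i '' box 0 1 0 1) ∩ interior (f j '' box 0 1 0 1) = ∅) :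
    ∀ i, ∃ a b : ℤ, 0 ≤ a ∧ a < n ∧ 0 ≤ b ∧ b < m ∧
      f i '' box 0 1 0 1 = box (a : ℝ) (a + 1) (b : ℝ) (b + 1) := by
  classical
  intro idx
  have hcells : ∀ p : Fin n × Fin m, ∃ b : Fin (n*m),
      f b '' RSPU.K = box ((p.1 : ℕ) : ℝ) ((p.1 : ℕ) + 1) ((p.2 : ℕ) : ℝ) ((p.2 : ℕ) + 1) := by
    intro p
    refine RSPU.cells f hsub hdisj hn hm (n*m) p.1 p.2 p.1.2 p.2.2 ?_
    have h1 : (p.1 : ℕ) < n := p.1.2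
    have h2 : (p.2 : ℕ) < m := p.2.2
    calc (p.2 : ℕ) * n + (p.1 : ℕ) < (p.2 : ℕ) * n + n := by omega
      _ = ((p.2 : ℕ) + 1) * n := by ring
      _ ≤ m * n := Nat.mul_le_mul_right n (Nat.succ_le_of_lt h2)
      _ = n * m := Nat.mul_comm m n
  choose σ hσ using hcells
  have hinj : Function.Injective σ := by
    intro p q h
    have h2 : box ((p.1 : ℕ) : ℝ) ((p.1 : ℕ) + 1) ((p.2 : ℕ) : ℝ) ((p.2 : ℕ) + 1)
        = box ((q.1 : ℕ) : ℝ) ((q.1 : ℕ) + 1) ((q.2 : ℕ) : ℝ) ((q.2 : ℕ) + 1) := by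
      rw [← hσ p, ← hσ q, h]
    have hpm : RSPU.pt ((p.1 : ℕ) : ℝ) ((p.2 : ℕ) : ℝ) ∈
        box ((q.1 : ℕ) : ℝ) ((q.1 : ℕ) + 1) ((q.2 : ℕ) : ℝ) ((q.2 : ℕ) + 1) := by
      rw [← h2]; exact RSPU.mem_box_corner _ _
    have hqm : RSPU.pt ((q.1 : ℕ) : ℝ) ((q.2 : ℕ) : ℝ) ∈
        box ((p.1 : ℕ) : ℝ) ((p.1 : ℕ) + 1) ((p.2 : ℕ) : ℝ) ((p.2 : ℕ) + 1) := by
      rw [h2]; exact RSPU.mem_box_corner _ _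
    have e1 : ((q.1 : ℕ) : ℝ) ≤ ((p.1 : ℕ) : ℝ) := hpm.1.1
    have e2 : ((p.1 : ℕ) : ℝ) ≤ ((q.1 : ℕ) : ℝ) := hqm.1.1
    have e3 : ((q.2 : ℕ) : ℝ) ≤ ((p.2 : ℕ) : ℝ) := hpm.2.1
    have e4 : ((p.2 : ℕ) : ℝ) ≤ ((q.2 : ℕ) : ℝ) := hqm.2.1
    have hfst : (p.1 : ℕ) = (q.1 : ℕ) := by exact_mod_cast le_antisymm e2 e1
    have hsnd : (p.2 : ℕ) = (q.2 : ℕ) := by exact_mod_cast le_antisymm e4 e3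
    exact Prod.ext (Fin.ext hfst) (Fin.ext hsnd)
  have hsurj : Function.Surjective σ :=
    ((Fintype.bijective_iff_injective_and_card σ).mpr ⟨hinj, by simp⟩).2
  obtain ⟨p, hp⟩ := hsurj idx
  refine ⟨((p.1 : ℕ) : ℤ), ((p.2 : ℕ) : ℤ), Int.ofNat_nonneg _, ?_, Int.ofNat_nonneg _, ?_, ?_⟩
  · exact_mod_cast p.1.2
  · exact_mod_cast p.2.2
  · have h := hσ p
    rw [hp] at h
    rw [h]
    push_cast
    rfl
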